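/- Let T be a finite set of positive integers and, for n ≥ 0, let c_T(n) be the number of compositions of n having no part belonging to T. Then in the ring ℤ⟦X⟧ of formal power series one has (1 − 2X + Σ_{i∈T} (X^i − X^{i+1})) · Σ_{n≥0} c_T(n) X^n = 1 − X. -/

import Mathlib

open PowerSeries

lemma comp_zero (T : Finset ℕ) :
    Nat.card {c : Composition 0 // ∀ p ∈ c.blocks, p ∉ T} = 1 := by
  rw [Nat.card_eq_one_iff_unique]
  have hblocks : ∀ c : Composition 0, c.blocks = [] := by
    intro c
    have h := c.blocks_sum
    rw [List.sum_eq_zero_iff] at h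
    rw [List.eq_nil_iff_forall_not_mem]
    intro a ha
    have := c.blocks_pos ha
    have := h a ha
    omega
  constructor
  · constructor
    intro ⟨c₁, _⟩ ⟨c₂, _⟩
    have : c₁ = c₂ := Composition.ext (by rw [hblocks c₁, hblocks c₂])
    simp [this]
  · exact ⟨⟨⟨[], by simp, by simp⟩, by simp⟩⟩

lemma hA_lemma (T : Finset ℕ) (hT : ∀ i ∈ T, 0 < i) :
    (1 - 2 * (X : PowerSeries ℤ) + ∑ i ∈ T, ((X : PowerSeries ℤ) ^ i - X ^ (i + 1))) =
    (1 - X) * (1 - PowerSeries.mk (fun k => if 1 ≤ k ∧ k ∉ T then (1:ℤ) else 0)) := by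
  classical
  set S := PowerSeries.mk (fun k => if 1 ≤ k ∧ k ∉ T then (1:ℤ) else 0) with hS
  have hrhs : (1 - X) * (1 - S) = 1 - X - S + X * S := by ring
  rw [hrhs]
  ext n
  simp only [map_add, map_sub, map_sum, PowerSeries.coeff_X_pow, coeff_one,
    PowerSeries.coeff_X, Finset.sum_sub_distrib, Finset.sum_ite_eq]
  rw [show (coeff (R := ℤ) n) (2 * X) = 2 * (if n = 1 then 1 else 0) by
    rw [two_mul, map_add, PowerSeries.coeff_X]; ring]
  match n with
  | 0 =>
    rw [PowerSeries.coeff_zero_X_mul]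
    simp only [hS, coeff_mk]
    have h0 : (0:ℕ) ∉ T := fun h => absurd (hT 0 h) (by omega)
    simp [h0]
  | (m+1) =>
    rw [PowerSeries.coeff_succ_X_mul]
    simp only [hS, coeff_mk]
    have : ∀ i ∈ T, (if m + 1 = i + 1 then (1:ℤ) else 0) = (if m = i then 1 else 0) := by
      intro i _; simp
    rw [Finset.sum_congr rfl this, Finset.sum_ite_eq]
    rcases Nat.eq_zero_or_pos m with rfl | hm
    · have h0 : (0:ℕ) ∉ T := fun h => absurd (hT 0 h) (by omega)
      by_cases h1 : 1 ∈ T <;> simp [h0, h1]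
    · have hm1 : m + 1 ≠ 0 := by omega
      by_cases h1 : m + 1 ∈ T <;> by_cases h2 : m ∈ T <;>
        simp [h1, h2, hm1, Nat.one_le_iff_ne_zero.mpr hm1, hm, Nat.one_le_iff_ne_zero,
          Nat.pos_iff_ne_zero.mp hm] 

lemma comp_rec (T : Finset ℕ) (n : ℕ) (hn : 0 < n) :
    Nat.card {c : Composition n // ∀ p ∈ c.blocks, p ∉ T} =
    ∑ k ∈ (Finset.Icc 1 n).filter (· ∉ T),
      Nat.card {c : Composition (n - k) // ∀ p ∈ c.blocks, p ∉ T} := by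
  classical
  have hne : ∀ c : Composition n, c.blocks ≠ [] := by
    intro c h
    have := c.blocks_sum
    rw [h] at this
    simp at this; omega
  have hsum : ∀ c : Composition n, c.blocks.headI + c.blocks.tail.sum = n := by
    intro c; rw [List.headI_add_tail_sum, c.blocks_sum]
  simp only [Nat.card_eq_fintype_card, Fintype.card_subtype]
  rw [Finset.card_eq_sum_card_fiberwise (f := fun c : Composition n => c.blocks.headI)
    (t := (Finset.Icc 1 n).filter (· ∉ T))]
  · apply Finset.sum_congr rfl
    intro k hk
    simp only [Finset.mem_filter, Finset.mem_Icc] at hk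
    obtain ⟨⟨hk1, hkn⟩, hkT⟩ := hk
    refine Finset.card_bij (fun c hc => Composition.mk c.blocks.tail
      (fun {i} hi => c.blocks_pos (List.mem_of_mem_tail hi)) ?tailsum) ?maps ?inj ?surj
    case tailsum =>
      simp only [Finset.mem_filter, Finset.mem_univ, true_and] at hc
      have := hsum c; rw [hc.2] at this; omega
    case maps =>
      intro c hc
      simp only [Finset.mem_filter, Finset.mem_univ, true_and] at hc ⊢
      intro p hp
      exact hc.1 p (List.mem_of_mem_tail hp)
    case inj =>
      intro c₁ h₁ c₂ h₂ he
      simp only [Finset.mem_filter, Finset.mem_univ, true_and] at h₁ h₂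
      have ht : c₁.blocks.tail = c₂.blocks.tail := congrArg Composition.blocks he
      apply Composition.ext
      rw [← List.cons_head!_tail (hne c₁), ← List.cons_head!_tail (hne c₂)]
      show c₁.blocks.headI :: _ = c₂.blocks.headI :: _
      rw [h₁.2, h₂.2, ht]
    case surj =>
      intro d hd
      simp only [Finset.mem_filter, Finset.mem_univ, true_and] at hd
      refine ⟨Composition.mk (k :: d.blocks)
        (fun {i} hi => ?_) (by simp [d.blocks_sum]; omega), ?_, ?_⟩
      · rcases List.mem_cons.1 hi with rfl | h
        exacts [hk1, d.blocks_pos h]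
      · simp only [Finset.mem_filter, Finset.mem_univ, true_and]
        constructor
        · intro p hp
          rcases List.mem_cons.1 hp with rfl | h
          exacts [hkT, hd p h]
        · rfl
      · apply Composition.ext; rfl
  · intro c hc
    simp only [Finset.mem_coe, Finset.mem_filter, Finset.mem_univ, true_and] at hc
    have hmem : c.blocks.headI ∈ c.blocks := by
      cases h : c.blocks with
      | nil => exact absurd h (hne c)
      | cons a l => simp
    simp only [Finset.mem_coe, Finset.mem_filter, Finset.mem_Icc]
    refine ⟨⟨c.blocks_pos hmem, ?_⟩, hc _ hmem⟩
    calc c.blocks.headI ≤ c.blocks.sum :=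
      List.single_le_sum (fun x _ => Nat.zero_le x) _ hmem
    _ = n := c.blocks_sum

lemma hkey_lemma (T : Finset ℕ) (hT : ∀ i ∈ T, 0 < i) :
    (1 - PowerSeries.mk (fun k => if 1 ≤ k ∧ k ∉ T then (1:ℤ) else 0)) *
      PowerSeries.mk
        (fun n => (Nat.card {c : Composition n // ∀ p ∈ c.blocks, p ∉ T} : ℤ)) = 1 := by
  classical
  ext n
  rw [sub_mul, one_mul, map_sub, coeff_one, PowerSeries.coeff_mul,
    Finset.Nat.sum_antidiagonal_eq_sum_range_succ_mk]
  simp only [coeff_mk, boole_mul, ← Finset.sum_filter]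
  have hfe : (Finset.range (n+1)).filter (fun k => 1 ≤ k ∧ k ∉ T) =
      (Finset.Icc 1 n).filter (· ∉ T) := by
    ext k
    simp only [Finset.mem_filter, Finset.mem_range, Finset.mem_Icc]
    constructor
    · rintro ⟨h1, h2, h3⟩; exact ⟨⟨h2, by omega⟩, h3⟩
    · rintro ⟨⟨h1, h2⟩, h3⟩; exact ⟨by omega, h1, h3⟩
  rw [hfe]
  rcases Nat.eq_zero_or_pos n with rfl | hn
  · have : (Finset.Icc 1 0).filter (· ∉ T) = ∅ := by simp
    rw [this, Finset.sum_empty, sub_zero, if_pos rfl, comp_zero T, Nat.cast_one]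
  · rw [if_neg (by omega), comp_rec T n hn]
    push_cast
    ring

/-- if `c_T(n)` is the number of compositions of `n` with no part in `T`
(a finite set of positive integers), then
`(1 − 2X + Σ_{i∈T} (X^i − X^(i+1))) · Σ_{n≥0} c_T(n) Xⁿ = 1 − X` in `ℤ⟦X⟧`. -/
theorem stmt_3 (T : Finset ℕ) (hT : ∀ i ∈ T, 0 < i) :
    (1 - 2 * (X : PowerSeries ℤ) + ∑ i ∈ T, ((X : PowerSeries ℤ) ^ i - X ^ (i + 1))) *
        PowerSeries.mk
          (fun n => (Nat.card {c : Composition n // ∀ p ∈ c.blocks, p ∉ T} : ℤ)) =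
      1 - X := by
  rw [hA_lemma T hT, mul_assoc, hkey_lemma T hT, mul_one]
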